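/- Let g(x; φ, X) denote the equilibrium payoff of the adversary on one front when it allocates x ≥ 0 against a player with budget X > 0 defending total battlefield value φ > 0, namely g(x; φ, X) = φ·x/(2X) if x < X and g(x; φ, X) = φ·(1 − X/(2x)) if x ≥ X. Suppose φ1, φ2, X1, X2 are positive reals with φ1·X2 ≥ φ2·X1 and 1 − √(φ1·X1·X2/φ2) > X2. Then the point x* = √(φ1·X1)/(√(φ1·X1) + √(φ2·X2)) lies in [0,1] and maximizes the adversary's total payoff f(x) = g(x; φ1, X1) + g(1 − x; φ2, X2) over all x ∈ [0,1]; that is, f(x) ≤ f(x*) for every x ∈ [0,1]. -/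

import Mathlib

/-- Equilibrium payoff of the adversary on one front when it allocates `x`
against a player with budget `X` defending total battlefield value `φ`. -/
noncomputable def advPayoff (x φ X : ℝ) : ℝ :=
  if x < X then φ * x / (2 * X) else φ * (1 - X / (2 * x))

/-- Tangent-line upper bound for the concave payoff `advPayoff · φ X` at a
tangent point `y0 > X`. -/
lemma advPayoff_tangent (φ X y y0 : ℝ) (hφ : 0 < φ) (hX : 0 < X)
    (hy : 0 ≤ y) (hy0 : X < y0) :
    advPayoff y φ X ≤ φ * (1 - X / (2 * y0)) + φ * X / (2 * y0 ^ 2) * (y - y0) := by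
  have hy0p : 0 < y0 := hX.trans hy0
  unfold advPayoff
  split_ifs with h
  · have key : φ * (1 - X / (2 * y0)) + φ * X / (2 * y0 ^ 2) * (y - y0) - φ * y / (2 * X)
        = φ * ((y0 - X) * (2 * X * y0 - y * (y0 + X))) / (2 * X * y0 ^ 2) := by
      field_simp
      ring
    have h1 : 0 < 2 * X * y0 - y * (y0 + X) := by nlinarith
    have h2 : 0 ≤ φ * ((y0 - X) * (2 * X * y0 - y * (y0 + X))) / (2 * X * y0 ^ 2) :=
      div_nonneg (mul_nonneg hφ.le (mul_nonneg (by linarith) h1.le)) (by positivity)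
    linarith [key ▸ h2]
  · push_neg at h
    have hyp : 0 < y := lt_of_lt_of_le hX h
    have key : φ * (1 - X / (2 * y0)) + φ * X / (2 * y0 ^ 2) * (y - y0)
        - φ * (1 - X / (2 * y)) = φ * X * (y - y0) ^ 2 / (2 * y * y0 ^ 2) := by
      field_simp
      ring
    have h2 : 0 ≤ φ * X * (y - y0) ^ 2 / (2 * y * y0 ^ 2) := by positivity
    linarith [key ▸ h2]

theorem case3_adversary_opt (φ1 φ2 X1 X2 : ℝ)
    (hφ1 : 0 < φ1) (hφ2 : 0 < φ2) (hX1 : 0 < X1) (hX2 : 0 < X2)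
    (hratio : φ1 * X2 ≥ φ2 * X1)
    (hcase : 1 - Real.sqrt (φ1 * X1 * X2 / φ2) > X2) :
    Real.sqrt (φ1 * X1) / (Real.sqrt (φ1 * X1) + Real.sqrt (φ2 * X2)) ∈ Set.Icc (0 : ℝ) 1 ∧
    ∀ x ∈ Set.Icc (0 : ℝ) 1,
      advPayoff x φ1 X1 + advPayoff (1 - x) φ2 X2 ≤
      advPayoff (Real.sqrt (φ1 * X1) / (Real.sqrt (φ1 * X1) + Real.sqrt (φ2 * X2))) φ1 X1 +
        advPayoff (1 - Real.sqrt (φ1 * X1) / (Real.sqrt (φ1 * X1) + Real.sqrt (φ2 * X2))) φ2 X2 := by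
  set s1 := Real.sqrt (φ1 * X1) with hs1def
  set s2 := Real.sqrt (φ2 * X2) with hs2def
  have hs1 : 0 < s1 := Real.sqrt_pos.2 (by positivity)
  have hs2 : 0 < s2 := Real.sqrt_pos.2 (by positivity)
  have hs1sq : s1 ^ 2 = φ1 * X1 := Real.sq_sqrt (by positivity)
  have hs2sq : s2 ^ 2 = φ2 * X2 := Real.sq_sqrt (by positivity)
  set a := s1 + s2 with hadef
  have ha : 0 < a := by positivity
  -- rewrite the sqrt in hcase
  have hsqrt_eq : Real.sqrt (φ1 * X1 * X2 / φ2) = s1 * X2 / s2 := by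
    have heq : φ1 * X1 * X2 / φ2 = (s1 * X2 / s2) ^ 2 := by
      have h : (s1 * X2 / s2) ^ 2 = s1 ^ 2 * X2 ^ 2 / s2 ^ 2 := by ring
      rw [h, hs1sq, hs2sq]
      field_simp
    rw [heq, Real.sqrt_sq (by positivity)]
  rw [hsqrt_eq] at hcase
  -- X2 < s2 / a
  have hX2a : X2 * a < s2 := by
    have h' : s1 * X2 < (1 - X2) * s2 := (div_lt_iff₀ hs2).1 (by linarith)
    nlinarith [h']
  -- s2 * X1 ≤ s1 * X2
  have hcross : s2 * X1 ≤ s1 * X2 := by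
    have hsq : (s2 * X1) ^ 2 ≤ (s1 * X2) ^ 2 := by
      have e1 : (s2 * X1) ^ 2 = φ2 * X1 * (X1 * X2) := by rw [mul_pow, hs2sq]; ring
      have e2 : (s1 * X2) ^ 2 = φ1 * X2 * (X1 * X2) := by rw [mul_pow, hs1sq]; ring
      rw [e1, e2]
      exact mul_le_mul_of_nonneg_right hratio (mul_pos hX1 hX2).le
    calc s2 * X1 = Real.sqrt ((s2 * X1) ^ 2) := (Real.sqrt_sq (by positivity)).symm
      _ ≤ Real.sqrt ((s1 * X2) ^ 2) := Real.sqrt_le_sqrt hsq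
      _ = s1 * X2 := Real.sqrt_sq (by positivity)
  -- X1 < s1 / a
  have hX1a : X1 * a < s1 := by
    have h3 : X1 * a * s2 < s1 * s2 := by
      nlinarith [mul_le_mul_of_nonneg_left hcross ha.le, mul_lt_mul_of_pos_left hX2a hs1]
    exact lt_of_mul_lt_mul_right (by linarith [h3]) hs2.le
  have hX1lt : X1 < s1 / a := (lt_div_iff₀ ha).2 hX1a
  have hX2lt : X2 < s2 / a := (lt_div_iff₀ ha).2 hX2a
  have hcompl : 1 - s1 / a = s2 / a := by field_simp; ring
  have hmem : s1 / a ∈ Set.Icc (0 : ℝ) 1 := by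
    constructor
    · positivity
    · rw [div_le_one ha]; nlinarith
  refine ⟨hmem, fun x hx => ?_⟩
  obtain ⟨hx0, hx1⟩ := hx
  -- tangent bounds
  have ht1 := advPayoff_tangent φ1 X1 x (s1 / a) hφ1 hX1 hx0 hX1lt
  have ht2 := advPayoff_tangent φ2 X2 (1 - x) (s2 / a) hφ2 hX2 (by linarith) hX2lt
  -- values at the optimum
  have hv1 : advPayoff (s1 / a) φ1 X1 = φ1 * (1 - X1 / (2 * (s1 / a))) := by
    unfold advPayoff; rw [if_neg (not_lt.2 hX1lt.le)]
  have hv2 : advPayoff (1 - s1 / a) φ2 X2 = φ2 * (1 - X2 / (2 * (s2 / a))) := by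
    unfold advPayoff; rw [hcompl, if_neg (not_lt.2 hX2lt.le)]
  rw [hv1, hv2, hcompl] at *
  -- equal slopes
  have he1 : φ1 * X1 / (2 * (s1 / a) ^ 2) = a ^ 2 / 2 := by
    rw [← hs1sq]; field_simp
  have he2 : φ2 * X2 / (2 * (s2 / a) ^ 2) = a ^ 2 / 2 := by
    rw [← hs2sq]; field_simp
  rw [he1] at ht1
  rw [he2] at ht2
  have hsum : s1 / a + s2 / a = 1 := by field_simp; exact hadef.symm
  have hzero : a ^ 2 / 2 * (x - s1 / a) + a ^ 2 / 2 * (1 - x - s2 / a) = 0 := by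
    have h : a ^ 2 / 2 * (x - s1 / a) + a ^ 2 / 2 * (1 - x - s2 / a)
        = a ^ 2 / 2 * (1 - (s1 / a + s2 / a)) := by ring
    rw [h, hsum]; ring
  linarith [ht1, ht2, hzero]
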